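/- Suppose transaction costs are zero (all spreads γ_t^{±,i} ≡ 0) and all policies are admissible. Then g_0 := sup over admissible policies a of E[G(a)] equals 0 if and only if the martingale condition E[H_T^{(t,i)} | 𝓕_t] = H_t^{(t,i)} holds P-almost surely for every t < m and every instrument i. -/

import Mathlib

open MeasureTheory ENNReal Real Filter Set

noncomputable section

variable {Ω : Type*}

/-- A policy: at each time `t < m`, an `F t`-measurable, essentially bounded action in `ℝ^n`. -/
def IsPolicy {mΩ : MeasurableSpace Ω} (P : Measure Ω) (m n : ℕ) (F : ℕ → MeasurableSpace Ω)
    (a : ℕ → Ω → Fin n → ℝ) : Prop :=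
  ∀ t < m, Measurable[F t] (a t) ∧ ∃ C : ℝ, ∀ᵐ ω ∂P, ∀ i, |a t ω i| ≤ C

/-- Terminal gain of a policy with zero transaction costs:
`G(a) = Σ_{t<m} a_t · (H_T^{(t)} - H_t^{(t)})`. -/
def linGain (m n : ℕ) (Hmid HT : ℕ → Ω → Fin n → ℝ)
    (a : ℕ → Ω → Fin n → ℝ) (ω : Ω) : ℝ :=
  ∑ t ∈ Finset.range m, ∑ i, a t ω i * (HT t ω i - Hmid t ω i)

/-- Key term computation: `∫ b (X - h) = ∫ b (E[X|𝓕] - h)` for bounded `𝓕`-measurable `b`. -/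
lemma term_integral {mΩ : MeasurableSpace Ω} (P : Measure Ω) [IsProbabilityMeasure P]
    {𝓕 : MeasurableSpace Ω} (h𝓕 : 𝓕 ≤ mΩ) {b X h : Ω → ℝ} {C : ℝ}
    (hb : Measurable[𝓕] b) (hbC : ∀ᵐ ω ∂P, |b ω| ≤ C)
    (hX : Integrable X P) (hhm : Measurable[𝓕] h) (hh : Integrable h P) :
    ∫ ω, b ω * (X ω - h ω) ∂P = ∫ ω, b ω * ((P[X|𝓕]) ω - h ω) ∂P := by
  have hbsm : AEStronglyMeasurable[mΩ] b P := (hb.mono h𝓕 le_rfl).aestronglyMeasurable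
  have hnorm : ∀ᵐ ω ∂P, ‖b ω‖ ≤ C := by simpa [Real.norm_eq_abs] using hbC
  have hXh : Integrable (fun ω => X ω - h ω) P := hX.sub hh
  have hbXh : Integrable (fun ω => b ω * (X ω - h ω)) P := hXh.bdd_mul hbsm hnorm
  have hpull : P[fun ω => b ω * (X ω - h ω)|𝓕]
      =ᵐ[P] fun ω => b ω * ((P[fun ω => X ω - h ω|𝓕]) ω) := by
    have := condExp_mul_of_stronglyMeasurable_left (μ := P) hb.stronglyMeasurable hbXh hXh
    filter_upwards [this] with ω hω using hω
  have hsub : P[fun ω => X ω - h ω|𝓕] =ᵐ[P] fun ω => (P[X|𝓕]) ω - h ω := by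
    have h1 : P[fun ω => X ω - h ω|𝓕] =ᵐ[P] P[X|𝓕] - P[h|𝓕] := condExp_sub hX hh 𝓕
    have h2 : P[h|𝓕] = h := condExp_of_stronglyMeasurable h𝓕 hhm.stronglyMeasurable hh
    filter_upwards [h1] with ω hω
    simp only [hω, Pi.sub_apply, h2]
  calc ∫ ω, b ω * (X ω - h ω) ∂P
      = ∫ ω, (P[fun ω => b ω * (X ω - h ω)|𝓕]) ω ∂P := (integral_condExp h𝓕).symm
    _ = ∫ ω, b ω * ((P[X|𝓕]) ω - h ω) ∂P := by
        refine integral_congr_ae ?_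
        filter_upwards [hpull, hsub] with ω h1 h2
        rw [h1, h2]

/-- With zero transaction costs, `g_0 = sup_a E[G(a)] = 0` if and only if
each instrument satisfies the martingale condition `E[H_T^{(t,i)} | F_t] = H_t^{(t,i)}` a.s. -/
theorem stmt_6
    {mΩ : MeasurableSpace Ω} (P : Measure Ω) [IsProbabilityMeasure P]
    (m n : ℕ) (F : ℕ → MeasurableSpace Ω) (hF_mono : Monotone F) (hF_le : ∀ t, F t ≤ mΩ)
    (Hmid HT : ℕ → Ω → Fin n → ℝ)
    (hHmid_meas : ∀ t < m, Measurable[F t] (Hmid t))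
    (hHT_meas : ∀ t < m, Measurable[F m] (HT t))
    (hHmid_bdd : ∀ t < m, ∃ C : ℝ, ∀ᵐ ω ∂P, ∀ i, |Hmid t ω i| ≤ C)
    (hHT_bdd : ∀ t < m, ∃ C : ℝ, ∀ᵐ ω ∂P, ∀ i, |HT t ω i| ≤ C)
    :
    (⨆ a : {a : ℕ → Ω → Fin n → ℝ // IsPolicy P m n F a},
        ((∫ ω, linGain m n Hmid HT a.1 ω ∂P : ℝ) : EReal)) = 0 ↔
      ∀ t < m, ∀ i : Fin n,
        (P[fun ω => HT t ω i | F t]) =ᵐ[P] fun ω => Hmid t ω i := by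
  -- basic integrability facts
  have hXint : ∀ t < m, ∀ i : Fin n, Integrable (fun ω => HT t ω i) P := by
    intro t ht i
    obtain ⟨C, hC⟩ := hHT_bdd t ht
    refine Integrable.mono' (integrable_const C)
      (((measurable_pi_apply i).comp ((hHT_meas t ht).mono (hF_le m) le_rfl)).aestronglyMeasurable)
      ?_
    filter_upwards [hC] with ω hω using by simpa [Real.norm_eq_abs] using hω i
  have hhint : ∀ t < m, ∀ i : Fin n, Integrable (fun ω => Hmid t ω i) P := by
    intro t ht i
    obtain ⟨C, hC⟩ := hHmid_bdd t ht
    refine Integrable.mono' (integrable_const C)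
      (((measurable_pi_apply i).comp ((hHmid_meas t ht).mono (hF_le t) le_rfl)).aestronglyMeasurable)
      ?_
    filter_upwards [hC] with ω hω using by simpa [Real.norm_eq_abs] using hω i
  have hhmeas : ∀ t < m, ∀ i : Fin n, Measurable[F t] (fun ω => Hmid t ω i) := by
    intro t ht i
    exact (measurable_pi_apply i).comp (hHmid_meas t ht)
  -- the key per-term computation for a policy
  have hterm : ∀ (b : Ω → ℝ) (C : ℝ), ∀ t < m, ∀ i : Fin n, Measurable[F t] b →
      (∀ᵐ ω ∂P, |b ω| ≤ C) →
      ∫ ω, b ω * (HT t ω i - Hmid t ω i) ∂P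
        = ∫ ω, b ω * ((P[fun ω => HT t ω i|F t]) ω - Hmid t ω i) ∂P := by
    intro b C t ht i hb hbC
    exact term_integral P (hF_le t) hb hbC (hXint t ht i) (hhmeas t ht i) (hhint t ht i)
  -- integral of linGain as a double sum
  have hgain : ∀ (a : ℕ → Ω → Fin n → ℝ), IsPolicy P m n F a →
      ∫ ω, linGain m n Hmid HT a ω ∂P
        = ∑ t ∈ Finset.range m, ∑ i,
            ∫ ω, a t ω i * (HT t ω i - Hmid t ω i) ∂P := by
    intro a ha
    have hint : ∀ t ∈ Finset.range m, ∀ i : Fin n,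
        Integrable (fun ω => a t ω i * (HT t ω i - Hmid t ω i)) P := by
      intro t ht i
      rw [Finset.mem_range] at ht
      obtain ⟨hm1, C, hC⟩ := ha t ht
      refine ((hXint t ht i).sub (hhint t ht i)).bdd_mul (c := C)
        (((measurable_pi_apply i).comp (hm1.mono (hF_le t) le_rfl)).aestronglyMeasurable) ?_
      filter_upwards [hC] with ω hω using by simpa [Real.norm_eq_abs] using hω i
    rw [show (fun ω => linGain m n Hmid HT a ω)
        = fun ω => ∑ t ∈ Finset.range m, ∑ i, a t ω i * (HT t ω i - Hmid t ω i) from rfl]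
    rw [integral_finset_sum _ (fun t ht => integrable_finset_sum _ (fun i _ => hint t ht i))]
    exact Finset.sum_congr rfl fun t ht => integral_finset_sum _ fun i _ => hint t ht i
  -- zero policy
  have hzero : IsPolicy P m n F (fun _ _ _ => 0) := by
    intro t ht
    exact ⟨measurable_const, 0, ae_of_all _ fun ω i => by simp⟩
  haveI : Nonempty {a : ℕ → Ω → Fin n → ℝ // IsPolicy P m n F a} := ⟨⟨_, hzero⟩⟩
  have hzero_gain : ∫ ω, linGain m n Hmid HT (fun _ _ _ => 0) ω ∂P = 0 := by
    simp [linGain]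
  constructor
  · -- sup = 0 → martingale
    intro hsup t ht i
    by_contra hne
    set d : Ω → ℝ := fun ω => (P[fun ω => HT t ω i|F t]) ω - Hmid t ω i with hd_def
    have hdmeas : Measurable[F t] d :=
      (stronglyMeasurable_condExp.measurable).sub (hhmeas t ht i)
    set s : Ω → ℝ := fun ω => if 0 ≤ d ω then 1 else -1 with hs_def
    have hsmeas : Measurable[F t] s :=
      Measurable.ite (measurableSet_le measurable_const hdmeas) measurable_const measurable_const
    have hsbd : ∀ ω, |s ω| ≤ 1 := by
      intro ω; by_cases h : 0 ≤ d ω <;> simp [hs_def, h]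
    have hsd : ∀ ω, s ω * d ω = |d ω| := by
      intro ω
      by_cases h : 0 ≤ d ω
      · simp [hs_def, h, abs_of_nonneg h]
      · simp [hs_def, h, abs_of_neg (lt_of_not_ge h)]
    -- the policy
    set a : ℕ → Ω → Fin n → ℝ :=
      fun t' ω i' => if t' = t ∧ i' = i then s ω else 0 with ha_def
    have hapol : IsPolicy P m n F a := by
      intro t' ht'
      constructor
      · refine @measurable_pi_lambda Ω (Fin n) (fun _ => ℝ) (F t') _ _ fun i' => ?_
        by_cases hc : t' = t ∧ i' = i
        · obtain ⟨h1, h2⟩ := hc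
          subst h1; subst h2
          simpa [ha_def] using hsmeas
        · simp only [ha_def, hc, if_false]
          exact measurable_const
      · refine ⟨1, ae_of_all _ fun ω i' => ?_⟩
        by_cases hc : t' = t ∧ i' = i
        · simpa [ha_def, hc] using hsbd ω
        · simp [ha_def, hc]
    have hgain_eq : ∀ ω, linGain m n Hmid HT a ω = s ω * (HT t ω i - Hmid t ω i) := by
      intro ω
      show (∑ t' ∈ Finset.range m, ∑ i', a t' ω i' * (HT t' ω i' - Hmid t' ω i'))
          = s ω * (HT t ω i - Hmid t ω i)
      rw [Finset.sum_eq_single_of_mem t (Finset.mem_range.2 ht)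
        (fun t' _ ht' => Finset.sum_eq_zero fun i' _ => by simp [ha_def, ht'])]
      rw [Finset.sum_eq_single_of_mem i (Finset.mem_univ i)
        (fun i' _ hi' => by simp [ha_def, hi'])]
      simp [ha_def]
    have hint_d : Integrable d P := integrable_condExp.sub (hhint t ht i)
    have hval : ∫ ω, linGain m n Hmid HT a ω ∂P = ∫ ω, |d ω| ∂P := by
      calc ∫ ω, linGain m n Hmid HT a ω ∂P
          = ∫ ω, s ω * (HT t ω i - Hmid t ω i) ∂P := by
            exact integral_congr_ae (ae_of_all _ hgain_eq)
        _ = ∫ ω, s ω * ((P[fun ω => HT t ω i|F t]) ω - Hmid t ω i) ∂P :=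
            hterm s 1 t ht i hsmeas (ae_of_all _ hsbd)
        _ = ∫ ω, |d ω| ∂P := integral_congr_ae (ae_of_all _ fun ω => hsd ω)
    have habs_pos : 0 < ∫ ω, |d ω| ∂P := by
      rcases (integral_nonneg (f := fun ω => |d ω|) fun ω => abs_nonneg (d ω)).lt_or_eq with h | h
      · exact h
      · exfalso
        have h0 : (fun ω => |d ω|) =ᵐ[P] 0 := by
          rw [← integral_eq_zero_iff_of_nonneg (fun ω => abs_nonneg (d ω)) hint_d.abs]
          exact h.symm
        apply hne
        filter_upwards [h0] with ω hω
        have : d ω = 0 := abs_eq_zero.mp hω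
        simpa [hd_def, sub_eq_zero] using this
    have hle : ((∫ ω, linGain m n Hmid HT a ω ∂P : ℝ) : EReal)
        ≤ (⨆ a : {a : ℕ → Ω → Fin n → ℝ // IsPolicy P m n F a},
            ((∫ ω, linGain m n Hmid HT a.1 ω ∂P : ℝ) : EReal)) :=
      le_iSup (fun a : {a : ℕ → Ω → Fin n → ℝ // IsPolicy P m n F a} =>
        ((∫ ω, linGain m n Hmid HT a.1 ω ∂P : ℝ) : EReal)) ⟨a, hapol⟩
    rw [hsup, hval] at hle
    exact absurd hle (not_le.2 (by exact_mod_cast habs_pos))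
  · -- martingale → sup = 0
    intro hmart
    have hall : ∀ a : {a : ℕ → Ω → Fin n → ℝ // IsPolicy P m n F a},
        ∫ ω, linGain m n Hmid HT a.1 ω ∂P = 0 := by
      rintro ⟨a, ha⟩
      rw [hgain a ha]
      refine Finset.sum_eq_zero fun t ht => Finset.sum_eq_zero fun i _ => ?_
      rw [Finset.mem_range] at ht
      obtain ⟨hm1, C, hC⟩ := ha t ht
      rw [hterm (fun ω => a t ω i) C t ht i ((measurable_pi_apply i).comp hm1)
        (by filter_upwards [hC] with ω hω using hω i)]
      rw [show (0 : ℝ) = ∫ ω, (fun _ : Ω => (0:ℝ)) ω ∂P by simp]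
      refine integral_congr_ae ?_
      filter_upwards [hmart t ht i] with ω hω
      simp [hω]
    refine le_antisymm (iSup_le fun a => by rw [hall a]; exact le_of_eq (by norm_cast)) ?_
    have := le_iSup (fun a : {a : ℕ → Ω → Fin n → ℝ // IsPolicy P m n F a} =>
      ((∫ ω, linGain m n Hmid HT a.1 ω ∂P : ℝ) : EReal)) ⟨_, hzero⟩
    rwa [hall ⟨_, hzero⟩] at this
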